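/- Let E be an exponential family on a finite set X of cardinality N, with extended tangent space T. If sup_P inf_{Q∈E} D(P‖Q) = log 2 (supremum over all probability distributions P on X), then the dimension of E satisfies dim T − 1 ≥ ⌈N/2⌉ − 1, i.e. dim T ≥ ⌈N/2⌉. -/

import Mathlib

open scoped BigOperators Classical

noncomputable section

variable {X : Type*}

/-- A probability distribution on a finite set `X`. -/
def IsProb [Fintype X] (P : X → ℝ) : Prop :=
  (∀ x, 0 ≤ P x) ∧ ∑ x, P x = 1

/-- Information divergence `D(P‖Q)` with values in `EReal`, equal to `⊤` if the
support of `P` is not contained in the support of `Q`.  (The convention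
`0 · log 0 = 0` holds automatically since `Real.log 0 = 0`.) -/
def KL [Fintype X] (P Q : X → ℝ) : EReal :=
  if ∀ x, Q x = 0 → P x = 0 then ((∑ x, P x * Real.log (P x / Q x) : ℝ) : EReal) else ⊤

/-- The exponential family with strictly positive reference measure `ν` and extended
tangent space `T` (a subspace of `ℝ^X` containing the constants): the set of strictly
positive probability distributions `P` with `log (P/ν) ∈ T`. -/
def expFam [Fintype X] (ν : X → ℝ) (T : Submodule ℝ (X → ℝ)) : Set (X → ℝ) :=
  {P | (∀ x, 0 < P x) ∧ ∑ x, P x = 1 ∧ (fun x => Real.log (P x / ν x)) ∈ T}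

/-- `sup_P inf_{Q ∈ E} D(P‖Q)`, supremum over all probability distributions `P`. -/
def maxDiv [Fintype X] (E : Set (X → ℝ)) : EReal :=
  ⨆ P ∈ {P : X → ℝ | IsProb P}, ⨅ Q ∈ E, KL P Q

/-- The orthogonal complement of `T` in `ℝ^X` w.r.t. the standard inner product
(the normal space of the exponential family with extended tangent space `T`). -/
def orthSpace [Fintype X] (T : Submodule ℝ (X → ℝ)) : Set (X → ℝ) :=
  {u | ∀ t ∈ T, ∑ x, u x * t x = 0}

/-- A circuit vector of a set `N ⊆ ℝ^X`: a nonzero element whose support is minimal,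
i.e. every `u ∈ N` with `supp u ⊆ supp v` is a scalar multiple of `v`. -/
def IsCircuitVector (N : Set (X → ℝ)) (v : X → ℝ) : Prop :=
  v ∈ N ∧ v ≠ 0 ∧ ∀ u ∈ N, Function.support u ⊆ Function.support v → ∃ α : ℝ, u = α • v

/-- A circuit of `N`: the support of a circuit vector. -/
def IsCircuit (N : Set (X → ℝ)) (σ : Set X) : Prop :=
  ∃ v, IsCircuitVector N v ∧ σ = Function.support v

/-- The closed partition model of the partition given by the equivalence relation `r`:
all probability distributions constant on each block. -/
def partModel [Fintype X] (r : X → X → Prop) : Set (X → ℝ) :=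
  {Q | IsProb Q ∧ ∀ x y, r x y → Q x = Q y}

/-- The partition exponential family of the partition given by the equivalence
relation `r`: all strictly positive probability distributions constant on each block. -/
def partExpFam [Fintype X] (r : X → X → Prop) : Set (X → ℝ) :=
  {P | (∀ x, 0 < P x) ∧ ∑ x, P x = 1 ∧ ∀ x y, r x y → P x = P y}

/-- The set `X̲` of points not annihilated by all of `N`. -/
def underlineSet (N : Set (X → ℝ)) : Set X := {x | ∃ v ∈ N, v x ≠ 0}

/-- The relation `x ∼ y` : every `v ∈ N` with `v x ≠ 0` has `v y ≠ 0`. -/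
def coRel (N : Set (X → ℝ)) (x y : X) : Prop := ∀ v ∈ N, v x ≠ 0 → v y ≠ 0

/-- `Z` is an equivalence class of `∼` on `X̲`. -/
def IsClassOf (N : Set (X → ℝ)) (Z : Set X) : Prop :=
  ∃ x ∈ underlineSet N, Z = {y | coRel N x y}

end


noncomputable section AuxStmt7

open scoped BigOperators Classical

set_option linter.unusedSectionVars false
set_option maxHeartbeats 1000000

variable {X : Type*} [Fintype X]

/-- Gibbs / log-sum inequality. -/
lemma gibbs_aux (S : Finset X) (p q : X → ℝ) (hp : ∀ x ∈ S, 0 < p x)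
    (hq : ∀ x ∈ S, 0 < q x) (hp1 : ∑ x ∈ S, p x = 1) :
    -Real.log (∑ x ∈ S, q x) ≤ ∑ x ∈ S, p x * Real.log (p x / q x) := by
  have hSne : S.Nonempty := by
    rcases Finset.eq_empty_or_nonempty S with h | h
    · exfalso; rw [h] at hp1; simp at hp1
    · exact h
  set s : ℝ := ∑ x ∈ S, q x with hs
  have hspos : 0 < s := Finset.sum_pos hq hSne
  have key : ∀ x ∈ S, p x * (Real.log (q x) - Real.log (p x) - Real.log s)
      ≤ q x / s - p x := by
    intro x hx
    have hpx := hp x hx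
    have hqx := hq x hx
    have h1 : 0 < q x / (p x * s) := by positivity
    have h2 := Real.log_le_sub_one_of_pos h1
    have h3 : Real.log (q x / (p x * s)) =
        Real.log (q x) - Real.log (p x) - Real.log s := by
      rw [Real.log_div (ne_of_gt hqx) (by positivity), Real.log_mul (ne_of_gt hpx) (ne_of_gt hspos)]
      ring
    have h4 : p x * Real.log (q x / (p x * s)) ≤ p x * (q x / (p x * s) - 1) :=
      mul_le_mul_of_nonneg_left h2 hpx.le
    rw [h3] at h4
    have h5 : p x * (q x / (p x * s) - 1) = q x / s - p x := by
      field_simp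
    linarith
  have hsum := Finset.sum_le_sum key
  have hL : ∑ x ∈ S, (q x / s - p x) = 0 := by
    rw [Finset.sum_sub_distrib, ← Finset.sum_div, ← hs, hp1, div_self (ne_of_gt hspos)]
    ring
  have hR : ∑ x ∈ S, p x * (Real.log (q x) - Real.log (p x) - Real.log s)
      = -(∑ x ∈ S, p x * Real.log (p x / q x)) - Real.log s := by
    have : ∀ x ∈ S, p x * (Real.log (q x) - Real.log (p x) - Real.log s)
        = -(p x * Real.log (p x / q x)) - p x * Real.log s := by
      intro x hx
      rw [Real.log_div (ne_of_gt (hp x hx)) (ne_of_gt (hq x hx))]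
      ring
    rw [Finset.sum_congr rfl this, Finset.sum_sub_distrib, Finset.sum_neg_distrib,
      ← Finset.sum_mul, hp1, one_mul]
  rw [hR, hL] at hsum
  linarith


/-- `F u = ∑ u x (log |u x| - log ν x)`; recall `Real.log` is even. -/
def Ffun (ν : X → ℝ) (u : X → ℝ) : ℝ := ∑ x, u x * (Real.log (u x) - Real.log (ν x))

/-- key per-Q inequality -/
lemma keyQ (ν : X → ℝ) (hν : ∀ x, 0 < ν x) (T : Submodule ℝ (X → ℝ))
    (h1 : (fun _ => (1 : ℝ)) ∈ T)
    (u : X → ℝ) (hu : u ≠ 0) (horth : ∀ t ∈ T, ∑ x, u x * t x = 0)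
    (Q : X → ℝ) (hQ : Q ∈ expFam ν T) :
    Real.log (1 + Real.exp (Ffun ν u / (∑ x, max (u x) 0)))
      ≤ ∑ x, (max (u x) 0 / (∑ x, max (u x) 0)) * Real.log ((max (u x) 0 / (∑ x, max (u x) 0)) / Q x) := by
  obtain ⟨hQpos, hQ1, hQT⟩ := hQ
  -- basic facts
  have hsum0 : ∑ x, u x = 0 := by
    have := horth _ h1; simpa using this
  set a : ℝ := ∑ x, max (u x) 0 with ha
  set Sp : Finset X := Finset.univ.filter (fun x => 0 < u x) with hSp
  set Sm : Finset X := Finset.univ.filter (fun x => u x < 0) with hSm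
  have haSp : a = ∑ x ∈ Sp, u x := by
    rw [ha, ← Finset.sum_filter_add_sum_filter_not Finset.univ (fun x => 0 < u x)]
    have e1 : ∑ x ∈ Finset.univ.filter (fun x => 0 < u x), max (u x) 0 = ∑ x ∈ Sp, u x :=
      Finset.sum_congr rfl (fun x hx => by
        have : 0 < u x := (Finset.mem_filter.1 hx).2; simp [max_eq_left this.le])
    have e2 : ∑ x ∈ Finset.univ.filter (fun x => ¬ 0 < u x), max (u x) 0 = 0 :=
      Finset.sum_eq_zero (fun x hx => by
        have : ¬ 0 < u x := (Finset.mem_filter.1 hx).2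
        simp [max_eq_right (not_lt.1 this)])
    rw [e1, e2, add_zero]
  have hbSm : a = ∑ x ∈ Sm, (-(u x)) := by
    have hsub : Sm ⊆ Finset.univ.filter (fun x => ¬ 0 < u x) := by
      intro x hx
      simp only [hSm, Finset.mem_filter, Finset.mem_univ, true_and] at hx ⊢
      exact not_lt.2 hx.le
    have h2 : ∑ x ∈ Finset.univ.filter (fun x => ¬ 0 < u x), u x = ∑ x ∈ Sm, u x := by
      symm
      apply Finset.sum_subset hsub
      intro x hx hxm
      simp only [hSm, Finset.mem_filter, Finset.mem_univ, true_and] at hx hxm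
      have e1 := le_of_not_gt hx
      have e2 := le_of_not_gt hxm
      linarith
    have h : ∑ x ∈ Sp, u x + ∑ x ∈ Sm, u x = 0 := by
      rw [← h2, Finset.sum_filter_add_sum_filter_not Finset.univ (fun x => 0 < u x), hsum0]
    rw [Finset.sum_neg_distrib]
    rw [haSp]
    linarith
  have hapos : 0 < a := by
    rcases lt_or_eq_of_le (Finset.sum_nonneg (fun x _ => le_max_right (u x) 0) : 0 ≤ a) with h | h
    · exact h
    · exfalso
      have hall : ∀ x, max (u x) 0 = 0 := by
        intro x
        have := (Finset.sum_eq_zero_iff_of_nonneg (fun x _ => le_max_right (u x) 0)).1 h.symm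
        exact this x (Finset.mem_univ x)
      have hle : ∀ x, u x ≤ 0 := fun x => by
        have := hall x; by_contra hc; push_neg at hc
        rw [max_eq_left hc.le] at this; exact (ne_of_gt hc) this
      have : ∀ x ∈ Finset.univ, u x = 0 := by
        intro x _
        have h0 : ∑ x, (-(u x)) = 0 := by rw [Finset.sum_neg_distrib, hsum0, neg_zero]
        have := (Finset.sum_eq_zero_iff_of_nonneg (fun x _ => neg_nonneg.2 (hle x))).1 h0 x
          (Finset.mem_univ x)
        linarith
      exact hu (funext fun x => this x (Finset.mem_univ x))
  -- the two divergences (restricted sums)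
  set Dp : ℝ := ∑ x ∈ Sp, (u x / a) * Real.log ((u x / a) / Q x) with hDp
  set Dm : ℝ := ∑ x ∈ Sm, ((-(u x)) / a) * Real.log (((-(u x)) / a) / Q x) with hDm
  have hgoalDp : ∑ x, (max (u x) 0 / a) * Real.log ((max (u x) 0 / a) / Q x) = Dp := by
    rw [hDp]
    rw [← Finset.sum_subset (Finset.subset_univ Sp) (fun x _ hx => by
      have hle : u x ≤ 0 := by
        by_contra hc
        exact hx (by simp [hSp, lt_of_not_ge hc])
      rw [max_eq_right hle]
      simp)]
    refine Finset.sum_congr rfl (fun x hx => by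
      have : 0 < u x := (Finset.mem_filter.1 hx).2
      rw [max_eq_left this.le])
  -- Gibbs inequalities
  have hSpne : Sp.Nonempty := by
    apply Finset.nonempty_of_sum_ne_zero (f := fun x => u x)
    rw [← haSp]; exact ne_of_gt hapos
  have hSmne : Sm.Nonempty := by
    apply Finset.nonempty_of_sum_ne_zero (f := fun x => -(u x))
    rw [← hbSm]; exact ne_of_gt hapos
  set qp : ℝ := ∑ x ∈ Sp, Q x with hqp
  set qm : ℝ := ∑ x ∈ Sm, Q x with hqm
  have hqppos : 0 < qp := Finset.sum_pos (fun x _ => hQpos x) hSpne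
  have hqmpos : 0 < qm := Finset.sum_pos (fun x _ => hQpos x) hSmne
  have hgp : -Real.log qp ≤ Dp := by
    apply gibbs_aux Sp (fun x => u x / a) Q
    · intro x hx
      have : 0 < u x := (Finset.mem_filter.1 hx).2
      positivity
    · intro x _; exact hQpos x
    · rw [← Finset.sum_div, ← haSp, div_self (ne_of_gt hapos)]
  have hgm : -Real.log qm ≤ Dm := by
    apply gibbs_aux Sm (fun x => (-(u x)) / a) Q
    · intro x hx
      have : u x < 0 := (Finset.mem_filter.1 hx).2
      have : 0 < -(u x) := by linarith
      positivity
    · intro x _; exact hQpos x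
    · rw [← Finset.sum_div, ← hbSm, div_self (ne_of_gt hapos)]
  -- q_p + q_m ≤ 1
  have hdisj : Disjoint Sp Sm := by
    rw [Finset.disjoint_left]
    intro x hx hx'
    have h1 : 0 < u x := (Finset.mem_filter.1 hx).2
    have h2 : u x < 0 := (Finset.mem_filter.1 hx').2
    linarith
  have hqsum : qp + qm ≤ 1 := by
    rw [hqp, hqm, ← Finset.sum_union hdisj, ← hQ1]
    exact Finset.sum_le_sum_of_subset_of_nonneg (Finset.subset_univ _)
      (fun x _ _ => (hQpos x).le)
  -- the identity  Dp - Dm = F/a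
  have hQlog : ∑ x, u x * Real.log (Q x) = ∑ x, u x * Real.log (ν x) := by
    have := horth _ hQT
    have e : ∀ x, u x * Real.log (Q x / ν x) = u x * Real.log (Q x) - u x * Real.log (ν x) := by
      intro x
      rw [Real.log_div (ne_of_gt (hQpos x)) (ne_of_gt (hν x))]
      ring
    rw [Finset.sum_congr rfl (fun x _ => e x), Finset.sum_sub_distrib] at this
    linarith
  have hident : a * Dp - a * Dm = Ffun ν u := by
    have eDp : a * Dp = ∑ x ∈ Sp, u x * (Real.log (u x) - Real.log a - Real.log (Q x)) := by
      rw [hDp, Finset.mul_sum]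
      refine Finset.sum_congr rfl (fun x hx => ?_)
      have hx' : 0 < u x := (Finset.mem_filter.1 hx).2
      rw [Real.log_div (by positivity) (ne_of_gt (hQpos x)),
          Real.log_div (ne_of_gt hx') (ne_of_gt hapos)]
      field_simp
    have eDm : a * Dm = ∑ x ∈ Sm, (-(u x)) * (Real.log (u x) - Real.log a - Real.log (Q x)) := by
      rw [hDm, Finset.mul_sum]
      refine Finset.sum_congr rfl (fun x hx => ?_)
      have hx' : u x < 0 := (Finset.mem_filter.1 hx).2
      have hx'' : 0 < -(u x) := by linarith
      rw [Real.log_div (by positivity) (ne_of_gt (hQpos x)),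
          Real.log_div (ne_of_gt hx'') (ne_of_gt hapos),
          Real.log_neg_eq_log]
      field_simp
    have huniv : ∑ x ∈ Sp, u x * (Real.log (u x) - Real.log a - Real.log (Q x))
        + ∑ x ∈ Sm, u x * (Real.log (u x) - Real.log a - Real.log (Q x))
        = ∑ x, u x * (Real.log (u x) - Real.log a - Real.log (Q x)) := by
      rw [← Finset.sum_union hdisj]
      apply Finset.sum_subset (Finset.subset_univ _)
      intro x _ hx
      have h0 : u x = 0 := by
        by_contra hc
        rcases lt_or_gt_of_ne hc with h | h
        · exact hx (Finset.mem_union_right _ (Finset.mem_filter.2 ⟨Finset.mem_univ x, h⟩))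
        · exact hx (Finset.mem_union_left _ (Finset.mem_filter.2 ⟨Finset.mem_univ x, h⟩))
      rw [h0]; ring
    have expand : ∑ x, u x * (Real.log (u x) - Real.log a - Real.log (Q x))
        = Ffun ν u := by
      have : ∀ x, u x * (Real.log (u x) - Real.log a - Real.log (Q x))
          = u x * (Real.log (u x) - Real.log (ν x))
            - u x * Real.log a - (u x * Real.log (Q x) - u x * Real.log (ν x)) := by
        intro x; ring
      rw [Finset.sum_congr rfl (fun x _ => this x)]
      rw [Finset.sum_sub_distrib, Finset.sum_sub_distrib, Finset.sum_sub_distrib,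
        ← Finset.sum_mul, hsum0, zero_mul]
      unfold Ffun
      have := hQlog
      linarith [hQlog]
    have eDm' : a * Dm = - ∑ x ∈ Sm, u x * (Real.log (u x) - Real.log a - Real.log (Q x)) := by
      rw [eDm, ← Finset.sum_neg_distrib]
      exact Finset.sum_congr rfl (fun x _ => by ring)
    rw [eDp, eDm'] at *
    rw [eDp, eDm']
    rw [sub_neg_eq_add, huniv, expand]
  set c : ℝ := Ffun ν u / a with hc
  have hDpDm : Dp = Dm + c := by
    rw [hc, ← hident]
    field_simp
    ring
  -- final case analysis
  have hepos : 0 < Real.exp c := Real.exp_pos c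
  have h1e : (0:ℝ) < 1 + Real.exp c := by linarith
  rw [hgoalDp]
  by_cases hcase : qm ≤ Real.exp c / (1 + Real.exp c)
  · have hlog : Real.log qm ≤ Real.log (Real.exp c / (1 + Real.exp c)) :=
      Real.log_le_log hqmpos hcase
    have : Real.log (Real.exp c / (1 + Real.exp c)) = c - Real.log (1 + Real.exp c) := by
      rw [Real.log_div (Real.exp_ne_zero c) (ne_of_gt h1e), Real.log_exp]
    rw [this] at hlog
    have : -Real.log qm + c ≥ Real.log (1 + Real.exp c) := by linarith
    linarith [hgm, hDpDm]
  · push_neg at hcase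
    have hqp1 : qp < 1 / (1 + Real.exp c) := by
      have h2 : 1 - Real.exp c / (1 + Real.exp c) = 1 / (1 + Real.exp c) := by
        field_simp
        ring
      linarith
    have hlog : Real.log qp < Real.log (1 / (1 + Real.exp c)) :=
      Real.log_lt_log hqppos hqp1
    have : Real.log (1 / (1 + Real.exp c)) = - Real.log (1 + Real.exp c) := by
      rw [Real.log_div one_ne_zero (ne_of_gt h1e), Real.log_one]
      ring
    rw [this] at hlog
    linarith [hgp]

lemma F_le_zero (ν : X → ℝ) (hν : ∀ x, 0 < ν x) (T : Submodule ℝ (X → ℝ))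
    (h1 : (fun _ => (1 : ℝ)) ∈ T)
    (hmax : maxDiv (expFam ν T) = ((Real.log 2 : ℝ) : EReal))
    (u : X → ℝ) (hu : u ≠ 0) (horth : ∀ t ∈ T, ∑ x, u x * t x = 0) :
    Ffun ν u ≤ 0 := by
  set a : ℝ := ∑ x, max (u x) 0 with ha
  have hapos : 0 < a := by
    have hsum0 : ∑ x, u x = 0 := by
      have := horth _ h1; simpa using this
    rcases lt_or_eq_of_le (Finset.sum_nonneg (fun x _ => le_max_right (u x) 0) : 0 ≤ a) with h | h
    · exact h
    · exfalso
      have hall : ∀ x, max (u x) 0 = 0 := fun x =>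
        (Finset.sum_eq_zero_iff_of_nonneg (fun x _ => le_max_right (u x) 0)).1 h.symm x
          (Finset.mem_univ x)
      have hle : ∀ x, u x ≤ 0 := fun x => by
        have := hall x; by_contra hc; push_neg at hc
        rw [max_eq_left hc.le] at this; exact (ne_of_gt hc) this
      have h0 : ∑ x, (-(u x)) = 0 := by rw [Finset.sum_neg_distrib, hsum0, neg_zero]
      have : ∀ x, u x = 0 := by
        intro x
        have := (Finset.sum_eq_zero_iff_of_nonneg (fun x _ => neg_nonneg.2 (hle x))).1 h0 x
          (Finset.mem_univ x)
        linarith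
      exact hu (funext this)
  set P : X → ℝ := fun x => max (u x) 0 / a with hP
  have hPprob : IsProb P := by
    constructor
    · intro x
      have : 0 ≤ max (u x) 0 := le_max_right _ _
      positivity
    · rw [hP, ← Finset.sum_div, ← ha, div_self (ne_of_gt hapos)]
  set c : ℝ := Ffun ν u / a with hc
  set L : ℝ := Real.log (1 + Real.exp c) with hL
  have hKL : ∀ Q ∈ expFam ν T, (L : EReal) ≤ KL P Q := by
    intro Q hQ
    have hQpos := hQ.1
    rw [KL, if_pos (fun x hx => absurd hx (ne_of_gt (hQpos x)))]
    rw [EReal.coe_le_coe_iff]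
    exact keyQ ν hν T h1 u hu horth Q hQ
  have hinf : (L : EReal) ≤ ⨅ Q ∈ expFam ν T, KL P Q := le_iInf₂ hKL
  have hsup : (⨅ Q ∈ expFam ν T, KL P Q) ≤ maxDiv (expFam ν T) := by
    apply le_biSup (f := fun P => ⨅ Q ∈ expFam ν T, KL P Q)
    exact hPprob
  have hLlog2 : L ≤ Real.log 2 := by
    rw [← EReal.coe_le_coe_iff]
    calc (L : EReal) ≤ _ := hinf
    _ ≤ _ := hsup
    _ = _ := hmax
  have h2 : 1 + Real.exp c ≤ 2 := by
    have hepos : (0:ℝ) < 1 + Real.exp c := by positivity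
    rw [hL] at hLlog2
    exact (Real.log_le_log_iff hepos (by norm_num)).1 hLlog2
  have hcle : c ≤ 0 := by
    rw [← Real.exp_le_one_iff]
    linarith
  rw [hc] at hcle
  calc Ffun ν u = (Ffun ν u / a) * a := by field_simp
  _ ≤ 0 := mul_nonpos_iff.2 (Or.inr ⟨hcle, hapos.le⟩)

lemma F_eq_zero (ν : X → ℝ) (hν : ∀ x, 0 < ν x) (T : Submodule ℝ (X → ℝ))
    (h1 : (fun _ => (1 : ℝ)) ∈ T)
    (hmax : maxDiv (expFam ν T) = ((Real.log 2 : ℝ) : EReal))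
    (u : X → ℝ) (horth : ∀ t ∈ T, ∑ x, u x * t x = 0) :
    Ffun ν u = 0 := by
  by_cases hu : u = 0
  · rw [hu]; unfold Ffun; simp
  · have h1' := F_le_zero ν hν T h1 hmax u hu horth
    have horth' : ∀ t ∈ T, ∑ x, (-u) x * t x = 0 := by
      intro t ht
      have := horth t ht
      simp only [Pi.neg_apply, neg_mul]
      rw [Finset.sum_neg_distrib, this, neg_zero]
    have h2' := F_le_zero ν hν T h1 hmax (-u) (neg_ne_zero.2 hu) horth'
    have hFneg : Ffun ν (-u) = - Ffun ν u := by
      unfold Ffun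
      rw [← Finset.sum_neg_distrib]
      refine Finset.sum_congr rfl (fun x _ => ?_)
      simp only [Pi.neg_apply]
      rw [Real.log_neg_eq_log]
      ring
    rw [hFneg] at h2'
    linarith


/-- derivative of one term of `F` along a line. -/
lemma term_deriv (p w c : ℝ) (hp : p ≠ 0) :
    HasDerivAt (fun t : ℝ => (p + t * w) * (Real.log (p + t * w) - c))
      (w * (Real.log p + 1 - c)) 0 := by
  have haff : HasDerivAt (fun t : ℝ => p + t * w) w 0 := by
    simpa using ((hasDerivAt_id (0:ℝ)).mul_const w).const_add p
  have h0 : p + (0:ℝ) * w = p := by ring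
  have h1 : HasDerivAt (fun y : ℝ => y * Real.log y) (Real.log p + 1) (p + (0:ℝ) * w) := by
    rw [h0]; exact Real.hasDerivAt_mul_log hp
  have h2 : HasDerivAt (fun t : ℝ => (p + t * w) * Real.log (p + t * w))
      ((Real.log p + 1) * w) 0 := by have := h1.comp 0 haff; exact this
  have h3 : HasDerivAt (fun t : ℝ => (p + t * w) * c) (w * c) 0 := by
    simpa [mul_comm] using haff.mul_const c
  have := h2.fun_sub h3
  convert this using 1
  · rfl
  · rfl
  · funext t; ring
  · ring

lemma log_term_deriv (p w : ℝ) (hp : p ≠ 0) :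
    HasDerivAt (fun t : ℝ => Real.log (p + t * w)) (w / p) 0 := by
  have haff : HasDerivAt (fun t : ℝ => p + t * w) w 0 := by
    simpa using ((hasDerivAt_id (0:ℝ)).mul_const w).const_add p
  have h0 : p + (0:ℝ) * w = p := by ring
  have h1 : HasDerivAt Real.log (p + (0:ℝ) * w)⁻¹ (p + (0:ℝ) * w) := by
    rw [h0]; exact Real.hasDerivAt_log hp
  have := h1.comp 0 haff
  convert this using 1
  · rfl
  · rfl
  · rfl
  rw [h0]; field_simp

/-- First derivative claim. -/
lemma claim1 (ν : X → ℝ) (v w : X → ℝ) (hvw : ∀ x, v x = 0 → w x = 0)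
    (hz : ∀ t : ℝ, Ffun ν (fun x => v x + t * w x) = 0) :
    ∑ x, w x * (Real.log (v x) + 1 - Real.log (ν x)) = 0 := by
  have hderiv : HasDerivAt (fun t : ℝ => Ffun ν (fun x => v x + t * w x))
      (∑ x, w x * (Real.log (v x) + 1 - Real.log (ν x))) 0 := by
    unfold Ffun
    apply HasDerivAt.fun_sum
    intro x _
    by_cases hvx : v x = 0
    · have hwx : w x = 0 := hvw x hvx
      have hfun : (fun t : ℝ => (v x + t * w x) * (Real.log (v x + t * w x) - Real.log (ν x)))
          = fun _ => 0 := by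
        funext t; rw [hvx, hwx]; ring
      rw [hfun, hwx, zero_mul]
      exact hasDerivAt_const 0 0
    · have := term_deriv (v x) (w x) (Real.log (ν x)) hvx
      convert this using 2
  have hconst : HasDerivAt (fun t : ℝ => Ffun ν (fun x => v x + t * w x)) 0 0 := by
    have hfun : (fun t : ℝ => Ffun ν (fun x => v x + t * w x)) = fun _ => 0 := funext hz
    rw [hfun]
    exact hasDerivAt_const 0 0
  have := hderiv.unique hconst
  linarith [this]

/-- Second derivative claim. -/
lemma claim2 (ν : X → ℝ) (u w : X → ℝ) (huw : ∀ x, u x = 0 → w x = 0)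
    (hG : ∀ᶠ t in nhds (0:ℝ),
      ∑ x, w x * (Real.log (u x + t * w x) + 1 - Real.log (ν x)) = 0) :
    ∑ x, (if u x = 0 then 0 else w x * w x / u x) = 0 := by
  have hderiv : HasDerivAt
      (fun t : ℝ => ∑ x, w x * (Real.log (u x + t * w x) + 1 - Real.log (ν x)))
      (∑ x, (if u x = 0 then 0 else w x * w x / u x)) 0 := by
    apply HasDerivAt.fun_sum
    intro x _
    by_cases hux : u x = 0
    · have hwx : w x = 0 := huw x hux
      have hfun : (fun t : ℝ => w x * (Real.log (u x + t * w x) + 1 - Real.log (ν x)))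
          = fun _ => 0 := by
        funext t; rw [hwx]; ring
      rw [hfun, if_pos hux]
      exact hasDerivAt_const 0 0
    · have h := (log_term_deriv (u x) (w x) hux).const_add
        (1 - Real.log (ν x))
      have h2 := ((log_term_deriv (u x) (w x) hux).const_mul (w x))
      have h3 : HasDerivAt
          (fun t : ℝ => w x * (Real.log (u x + t * w x) + 1 - Real.log (ν x)))
          (w x * (w x / u x)) 0 := by
        have : (fun t : ℝ => w x * (Real.log (u x + t * w x) + 1 - Real.log (ν x)))
            = fun t => w x * Real.log (u x + t * w x) + w x * (1 - Real.log (ν x)) := by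
          funext t; ring
        rw [this]
        simpa using h2.add_const (w x * (1 - Real.log (ν x)))
      rw [if_neg hux]
      convert h3 using 1
      · rfl
      · rfl
      field_simp
  have hconst : HasDerivAt
      (fun t : ℝ => ∑ x, w x * (Real.log (u x + t * w x) + 1 - Real.log (ν x))) 0 0 := by
    exact (hasDerivAt_const (0:ℝ) (0:ℝ)).congr_of_eventuallyEq
      (hG.mono fun t ht => by simpa using ht)
  exact hderiv.unique hconst

/-- existence of an element of maximal support. -/
lemma exists_max_support (N : Submodule ℝ (EuclideanSpace ℝ X)) (hN : N ≠ ⊥) :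
    ∃ u, u ∈ N ∧ u ≠ 0 ∧ ∀ w ∈ N, ∀ x, u x = 0 → w x = 0 := by
  classical
  set S : Set ℕ :=
    {k | ∃ u : EuclideanSpace ℝ X, u ∈ N ∧ u ≠ 0 ∧
      (Finset.univ.filter (fun x => u x ≠ 0)).card = k} with hS
  obtain ⟨u0, hu0N, hu0⟩ := Submodule.exists_mem_ne_zero_of_ne_bot hN
  have hS0 : S.Nonempty := ⟨_, u0, hu0N, hu0, rfl⟩
  have hbdd : BddAbove S := by
    refine ⟨Fintype.card X, ?_⟩
    rintro k ⟨u, -, -, hk⟩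
    rw [← hk]
    exact (Finset.card_filter_le _ _).trans (by simp)
  obtain ⟨u, huN, hune, hcard⟩ := Nat.sSup_mem hS0 hbdd
  refine ⟨u, huN, hune, ?_⟩
  intro w hwN x hux
  by_contra hwx
  -- bad set of parameters
  set B : Set ℝ := insert 0 (Set.range (fun y : X => -u y / w y)) with hB
  have hBfin : B.Finite := (Set.finite_range _).insert 0
  obtain ⟨t, ht⟩ := hBfin.infinite_compl.nonempty
  have ht0 : t ≠ 0 := fun h => ht (by rw [h]; exact Set.mem_insert 0 _)
  have htr : ∀ y, t ≠ -u y / w y := fun y h => ht (Set.mem_insert_iff.2 (Or.inr ⟨y, h.symm⟩))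
  set v : EuclideanSpace ℝ X := u + t • w with hv
  have hvN : v ∈ N := N.add_mem huN (N.smul_mem t hwN)
  have hvapp : ∀ y, v y = u y + t * w y := fun y => rfl
  have hsupp : ∀ y, u y ≠ 0 → v y ≠ 0 := by
    intro y huy hvy
    rw [hvapp y] at hvy
    by_cases hwy : w y = 0
    · rw [hwy] at hvy; simp at hvy; exact huy hvy
    · exact htr y (by field_simp; linarith [hvy])
  have hvx : v x ≠ 0 := by
    rw [hvapp x, hux, zero_add]
    exact mul_ne_zero ht0 hwx
  have hss : (Finset.univ.filter (fun y => u y ≠ 0)) ⊂ (Finset.univ.filter (fun y => v y ≠ 0)) := by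
    constructor
    · intro y hy
      simp only [Finset.mem_filter, Finset.mem_univ, true_and] at hy ⊢
      exact hsupp y hy
    · intro hsub
      have := hsub (Finset.mem_filter.2 ⟨Finset.mem_univ x, hvx⟩)
      simp only [Finset.mem_filter, Finset.mem_univ, true_and] at this
      exact this hux
  have hlt : sSup S < (Finset.univ.filter (fun y => v y ≠ 0)).card := by
    rw [← hcard]
    exact Finset.card_lt_card hss
  have hmem : (Finset.univ.filter (fun y => v y ≠ 0)).card ∈ S :=
    ⟨v, hvN, fun h => hvx (by rw [h]; rfl), rfl⟩
  exact absurd (le_csSup hbdd hmem) (not_le.2 hlt)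


lemma dim_bound [Nonempty X] (ν : X → ℝ) (T₀ : Submodule ℝ (X → ℝ))
    (hF : ∀ u : X → ℝ, (∀ t ∈ T₀, ∑ x, u x * t x = 0) → Ffun ν u = 0) :
    (Fintype.card X + 1) / 2 ≤ Module.finrank ℝ T₀ := by
  classical
  set e := WithLp.linearEquiv 2 ℝ (X → ℝ) with he
  set T' : Submodule ℝ (EuclideanSpace ℝ X) :=
    T₀.comap (e : EuclideanSpace ℝ X →ₗ[ℝ] (X → ℝ)) with hT'
  have hTT' : Module.finrank ℝ T' = Module.finrank ℝ T₀ :=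
    (LinearEquiv.ofSubmodule' e T₀).finrank_eq
  set N' : Submodule ℝ (EuclideanSpace ℝ X) := T'ᗮ with hN'
  have hsum : Module.finrank ℝ T' + Module.finrank ℝ N' = Fintype.card X := by
    rw [hN', Submodule.finrank_add_finrank_orthogonal, finrank_euclideanSpace]
  have hcardpos : 0 < Fintype.card X := Fintype.card_pos
  -- translation: elements of N' are orthogonal to T₀
  have horthN : ∀ w : EuclideanSpace ℝ X, w ∈ N' → ∀ t ∈ T₀, ∑ x, w x * t x = 0 := by
    intro w hw t ht
    have ht' : e.symm t ∈ T' := by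
      rw [hT', Submodule.mem_comap]
      simpa using ht
    have h0 := (Submodule.mem_orthogonal T' w).1 hw _ ht'
    rw [PiLp.inner_apply] at h0
    simp only [RCLike.inner_apply, starRingEnd_apply, star_trivial] at h0
    rw [← h0]
    apply Finset.sum_congr rfl
    intro x _
    have : (e.symm t) x = t x := rfl
    rw [this, mul_comm]
  by_cases hbot : N' = ⊥
  · rw [hbot, finrank_bot] at hsum
    omega
  obtain ⟨u, huN, hune, humax⟩ := exists_max_support N' hbot
  have horthU := horthN u huN
  -- the quadratic form vanishes
  have hQform : ∀ w : EuclideanSpace ℝ X, w ∈ N' →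
      ∑ x, (if u x = 0 then 0 else w x * w x / u x) = 0 := by
    intro w hw
    have horthW := horthN w hw
    have hvw : ∀ x, u x = 0 → w x = 0 := humax w hw
    have hFz : ∀ c : ℝ, Ffun ν (fun x => u x + c * w x) = 0 := by
      intro c
      apply hF
      intro t ht
      have h1 := horthU t ht
      have h2 := horthW t ht
      have hexp : ∑ x, (u x + c * w x) * t x
          = ∑ x, u x * t x + c * ∑ x, w x * t x := by
        rw [Finset.mul_sum, ← Finset.sum_add_distrib]
        exact Finset.sum_congr rfl (fun x _ => by ring)
      rw [hexp, h1, h2]; ring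
    have hev : ∀ᶠ t in nhds (0:ℝ), ∀ x, u x ≠ 0 → u x + t * w x ≠ 0 := by
      rw [Filter.eventually_all]
      intro x
      by_cases hux : u x = 0
      · filter_upwards with t h
        exact absurd hux h
      · have hcont : Continuous (fun t : ℝ => u x + t * w x) := by continuity
        have htend : Filter.Tendsto (fun t : ℝ => u x + t * w x) (nhds 0) (nhds (u x)) := by
          have := hcont.tendsto 0
          simpa using this
        filter_upwards [htend.eventually (eventually_ne_nhds hux)] with t ht _
        exact ht
    have hG : ∀ᶠ t in nhds (0:ℝ),
        ∑ x, w x * (Real.log (u x + t * w x) + 1 - Real.log (ν x)) = 0 := by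
      filter_upwards [hev] with t htev
      have hcl := claim1 ν (fun x => u x + t * w x) w
        (fun x hx => by
          by_cases hux : u x = 0
          · exact hvw x hux
          · exact absurd hx (htev x hux))
        (fun s => by
          have hfun : (fun x => (u x + t * w x) + s * w x)
              = fun x => u x + (t + s) * w x := by
            funext x; ring
          rw [hfun]
          exact hFz (t + s))
      simpa using hcl
    exact claim2 ν u w hvw hG
  -- polarization
  have hB : ∀ w w' : EuclideanSpace ℝ X, w ∈ N' → w' ∈ N' →
      ∑ x, (if u x = 0 then 0 else w x * w' x / u x) = 0 := by
    intro w w' hw hw'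
    have h1 := hQform w hw
    have h2 := hQform w' hw'
    have h3 := hQform (w + w') (N'.add_mem hw hw')
    have hee : ∀ x : X, (if u x = 0 then 0 else (w + w') x * (w + w') x / u x)
        = ((if u x = 0 then 0 else w x * w x / u x)
          + (if u x = 0 then 0 else w' x * w' x / u x))
          + 2 * (if u x = 0 then 0 else w x * w' x / u x) := by
      intro x
      have happ : (w + w') x = w x + w' x := rfl
      by_cases hux : u x = 0
      · simp [hux]
      · simp only [if_neg hux, happ]; ring
    rw [Finset.sum_congr rfl (fun x _ => hee x), Finset.sum_add_distrib,
      Finset.sum_add_distrib, ← Finset.mul_sum, h1, h2] at h3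
    linarith
  -- the injective linear map N' → T'
  set φ : N' →ₗ[ℝ] EuclideanSpace ℝ X :=
    { toFun := fun a => WithLp.toLp 2 ((fun x => if u x = 0 then 0 else a.1 x / u x) : X → ℝ)
      map_add' := by
        intro a b
        ext x
        show (if u x = 0 then 0 else (a + b : N').1 x / u x)
          = (if u x = 0 then 0 else a.1 x / u x) + (if u x = 0 then 0 else b.1 x / u x)
        have happ : (a + b : N').1 x = a.1 x + b.1 x := rfl
        rw [happ]
        by_cases hux : u x = 0
        · simp [hux]
        · simp only [if_neg hux]; ring
      map_smul' := by
        intro c a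
        ext x
        show (if u x = 0 then 0 else (c • a : N').1 x / u x)
          = c * (if u x = 0 then 0 else a.1 x / u x)
        have happ : (c • a : N').1 x = c * a.1 x := rfl
        rw [happ]
        by_cases hux : u x = 0
        · simp [hux]
        · simp only [if_neg hux]; ring } with hphi
  have happly : ∀ (a : N') (x : X), (φ a) x = if u x = 0 then 0 else a.1 x / u x :=
    fun a x => rfl
  have hmemT' : ∀ a : N', φ a ∈ T' := by
    intro a
    have hTo : T' = N'ᗮ := by rw [hN', Submodule.orthogonal_orthogonal]
    rw [hTo, Submodule.mem_orthogonal]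
    intro y hy
    rw [PiLp.inner_apply]
    simp only [RCLike.inner_apply, starRingEnd_apply, star_trivial]
    have := hB a.1 y a.2 hy
    rw [← this]
    apply Finset.sum_congr rfl
    intro x _
    rw [happly]
    by_cases hux : u x = 0
    · simp [hux]
    · simp only [if_neg hux]; ring
  have hinj : Function.Injective φ := by
    rw [injective_iff_map_eq_zero]
    intro a ha
    have hx : ∀ x, a.1 x = 0 := by
      intro x
      have h0 : (φ a) x = 0 := by rw [ha]; rfl
      rw [happly] at h0
      by_cases hux : u x = 0
      · exact humax a.1 a.2 x hux
      · rw [if_neg hux] at h0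
        exact (div_eq_zero_iff.1 h0).resolve_right hux
    exact Subtype.ext (PiLp.ext hx)
  have hfr : Module.finrank ℝ N' ≤ Module.finrank ℝ T' := by
    have hinj' : Function.Injective (φ.codRestrict T' hmemT') :=
      fun a b hab => hinj (congrArg Subtype.val hab)
    exact LinearMap.finrank_le_finrank_of_injective hinj'
  omega


end AuxStmt7

/-- if `sup_P inf_{Q ∈ E} D(P‖Q) = log 2`, then `dim T ≥ ⌈N/2⌉`
(note `⌈N/2⌉ = (N+1)/2` with natural number division). -/
theorem stmt7 (X : Type*) [Fintype X] [Nonempty X]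
    (ν : X → ℝ) (hν : ∀ x, 0 < ν x)
    (T : Submodule ℝ (X → ℝ)) (h1 : (fun _ => (1 : ℝ)) ∈ T)
    (hmax : maxDiv (expFam ν T) = ((Real.log 2 : ℝ) : EReal)) :
    (Fintype.card X + 1) / 2 ≤ Module.finrank ℝ T := by
  exact dim_bound ν T (fun u horth => F_eq_zero ν hν T h1 hmax u horth)
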